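/- (Turning point theorem, unstable side λ > 0.) Let φ : ℝ → E be a C^∞ curve and T, Y_1, …, Y_p : ℝ → ℝ be C^∞ functions such that for every λ the point φ(λ) satisfies the first law with temperature T(λ) and potentials Y_i(λ), with T(0) > 0. Suppose λ = 0 is a turning point: φ′(0) ≠ 0 and (M∘φ)′(0) = (X^i∘φ)′(0) = 0 for all i (hence also (S∘φ)′(0) = 0). Suppose σ := (d/dλ)[T′(λ)·(S∘φ)′(λ) + Σ_{i=1}^p Y_i′(λ)·(X^i∘φ)′(λ)] evaluated at λ = 0 satisfies σ > 0. Finally, suppose there exists a continuous map ũ : ℝ → E such that for all λ in a neighborhood of 0, λ·DS_{φ(λ)}(ũ(λ)) = (S∘φ)′(λ) and λ·DX^i_{φ(λ)}(ũ(λ)) = (X^i∘φ)′(λ) for all i. Then there exists ε > 0 such that for all λ ∈ (0, ε), the vector û(λ) := φ′(λ) − λ·ũ(λ) satisfies DM_{φ(λ)}(û(λ)) = DS_{φ(λ)}(û(λ)) = DX^i_{φ(λ)}(û(λ)) = 0 for all i, and B_{φ(λ)}(û(λ), û(λ)) < 0; in particular φ(λ) is thermodynamically unstable for all λ ∈ (0,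 ε). -/

import Mathlib

open Filter Topology

/-- The second Fréchet derivative of `f : E → ℝ` at `φ`, applied to `u`, `v`. -/
noncomputable def D2 {E : Type*} [NormedAddCommGroup E] [NormedSpace ℝ E]
    (f : E → ℝ) (φ u v : E) : ℝ :=
  fderiv ℝ (fderiv ℝ f) φ u v

/-- `φ` satisfies the first law with temperature `T` and potentials `Y i`:
`DM_φ = T·DS_φ + ∑ i, Y i · DX^i_φ` as continuous linear functionals. -/
def FirstLaw {E : Type*} [NormedAddCommGroup E] [NormedSpace ℝ E] {p : ℕ}
    (M S : E → ℝ) (X : Fin p → E → ℝ) (φ : E) (T : ℝ) (Y : Fin p → ℝ) : Prop :=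
  fderiv ℝ M φ = T • fderiv ℝ S φ + ∑ i, Y i • fderiv ℝ (X i) φ

/-- The canonical bilinear form
`B_φ(u,v) = D²M_φ(u,v) − T·D²S_φ(u,v) − ∑ i, Y i·D²X^i_φ(u,v)`. -/
noncomputable def Bform {E : Type*} [NormedAddCommGroup E] [NormedSpace ℝ E] {p : ℕ}
    (M S : E → ℝ) (X : Fin p → E → ℝ) (φ : E) (T : ℝ) (Y : Fin p → ℝ) (u v : E) : ℝ :=
  D2 M φ u v - T * D2 S φ u v - ∑ i, Y i * D2 (X i) φ u v

section tpt_helpers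
variable {E : Type*} [NormedAddCommGroup E] [NormedSpace ℝ E]

lemma tpt_one_le : ((⊤ : ℕ∞) : WithTop ℕ∞) ≠ 0 := by simp

lemma tpt_chain {f : E → ℝ} (hf : ContDiff ℝ (⊤ : ℕ∞) f)
    {φ : ℝ → E} (hφ : ContDiff ℝ (⊤ : ℕ∞) φ) (l : ℝ) :
    deriv (f ∘ φ) l = fderiv ℝ f (φ l) (deriv φ l) :=
  ((hf.differentiable tpt_one_le (φ l)).hasFDerivAt.comp_hasDerivAt l
    (hφ.differentiable tpt_one_le l).hasDerivAt).deriv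

lemma tpt_fderiv_smooth {F : Type*} [NormedAddCommGroup F] [NormedSpace ℝ F]
    {f : E → F} (hf : ContDiff ℝ (⊤ : ℕ∞) f) :
    ContDiff ℝ (⊤ : ℕ∞) (fderiv ℝ f) :=
  hf.fderiv_right (le_of_eq rfl)

lemma tpt_hasDerivAt_fderiv {f : E → ℝ} (hf : ContDiff ℝ (⊤ : ℕ∞) f)
    {φ : ℝ → E} (hφ : ContDiff ℝ (⊤ : ℕ∞) φ) (l : ℝ) :
    HasDerivAt (fun l => fderiv ℝ f (φ l))
      (fderiv ℝ (fderiv ℝ f) (φ l) (deriv φ l)) l :=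
  (((tpt_fderiv_smooth hf).differentiable tpt_one_le (φ l)).hasFDerivAt.comp_hasDerivAt l
    (hφ.differentiable tpt_one_le l).hasDerivAt)

lemma tpt_D2_symm {f : E → ℝ} (hf : ContDiff ℝ (⊤ : ℕ∞) f) (φ u v : E) :
    D2 f φ u v = D2 f φ v u :=
  second_derivative_symmetric (fun y => (hf.differentiable tpt_one_le y).hasFDerivAt)
    (((tpt_fderiv_smooth hf).differentiable tpt_one_le φ).hasFDerivAt) u v

variable {p : ℕ}

lemma tpt_Bform_sub_smul_left (M S : E → ℝ) (X : Fin p → E → ℝ) (x : E) (T : ℝ)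
    (Y : Fin p → ℝ) (a b v : E) (c : ℝ) :
    Bform M S X x T Y (a - c • b) v
      = Bform M S X x T Y a v - c * Bform M S X x T Y b v := by
  simp only [Bform, D2, map_sub, map_smul, ContinuousLinearMap.sub_apply,
    ContinuousLinearMap.smul_apply, smul_eq_mul, mul_sub, Finset.sum_sub_distrib]
  rw [Finset.mul_sum]
  ring_nf

lemma tpt_Bform_sub_smul_right (M S : E → ℝ) (X : Fin p → E → ℝ) (x : E) (T : ℝ)
    (Y : Fin p → ℝ) (u a b : E) (c : ℝ) :
    Bform M S X x T Y u (a - c • b)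
      = Bform M S X x T Y u a - c * Bform M S X x T Y u b := by
  simp only [Bform, D2, map_sub, map_smul, smul_eq_mul, mul_sub, Finset.sum_sub_distrib]
  rw [Finset.mul_sum]
  ring_nf

lemma tpt_Bform_symm {M S : E → ℝ} {X : Fin p → E → ℝ}
    (hM : ContDiff ℝ (⊤ : ℕ∞) M) (hS : ContDiff ℝ (⊤ : ℕ∞) S)
    (hX : ∀ i, ContDiff ℝ (⊤ : ℕ∞) (X i)) (x : E) (T : ℝ) (Y : Fin p → ℝ) (u v : E) :
    Bform M S X x T Y u v = Bform M S X x T Y v u := by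
  unfold Bform
  rw [tpt_D2_symm hM, tpt_D2_symm hS]
  congr 1
  exact Finset.sum_congr rfl fun i _ => by rw [tpt_D2_symm (hX i)]

/-- Differentiated first law. -/
lemma tpt_Bphi' {M S : E → ℝ} {X : Fin p → E → ℝ}
    (hM : ContDiff ℝ (⊤ : ℕ∞) M) (hS : ContDiff ℝ (⊤ : ℕ∞) S)
    (hX : ∀ i, ContDiff ℝ (⊤ : ℕ∞) (X i))
    {φ : ℝ → E} (hφ : ContDiff ℝ (⊤ : ℕ∞) φ)
    {T : ℝ → ℝ} {Y : Fin p → ℝ → ℝ}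
    (hT : ContDiff ℝ (⊤ : ℕ∞) T) (hY : ∀ i, ContDiff ℝ (⊤ : ℕ∞) (Y i))
    (hfl : ∀ l : ℝ, FirstLaw M S X (φ l) (T l) (fun i => Y i l)) (l : ℝ) (v : E) :
    Bform M S X (φ l) (T l) (fun i => Y i l) (deriv φ l) v
      = deriv T l * fderiv ℝ S (φ l) v + ∑ i, deriv (Y i) l * fderiv ℝ (X i) (φ l) v := by
  have hMd := tpt_hasDerivAt_fderiv hM hφ l
  have hSd := tpt_hasDerivAt_fderiv hS hφ l
  have hTd := (hT.differentiable tpt_one_le l).hasDerivAt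
  have hRHS : HasDerivAt (fun l => T l • fderiv ℝ S (φ l) + ∑ i, Y i l • fderiv ℝ (X i) (φ l))
      ((T l • fderiv ℝ (fderiv ℝ S) (φ l) (deriv φ l) + deriv T l • fderiv ℝ S (φ l)) +
        ∑ i, (Y i l • fderiv ℝ (fderiv ℝ (X i)) (φ l) (deriv φ l)
          + deriv (Y i) l • fderiv ℝ (X i) (φ l))) l :=
    (hTd.smul hSd).add (HasDerivAt.fun_sum fun i _ =>
      ((hY i).differentiable tpt_one_le l).hasDerivAt.smul (tpt_hasDerivAt_fderiv (hX i) hφ l))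
  have hFG : (fun l => fderiv ℝ M (φ l)) =
      fun l => T l • fderiv ℝ S (φ l) + ∑ i, Y i l • fderiv ℝ (X i) (φ l) :=
    funext fun l => hfl l
  rw [hFG] at hMd
  have heq := hMd.unique hRHS
  have hv := congrArg (fun (A : E →L[ℝ] ℝ) => A v) heq
  simp only [ContinuousLinearMap.add_apply, ContinuousLinearMap.smul_apply,
    ContinuousLinearMap.sum_apply, smul_eq_mul] at hv
  simp only [Bform, D2]
  rw [hv, Finset.sum_add_distrib]
  ring

end tpt_helpers

theorem turning_point_theorem_pos
    {E : Type*} [NormedAddCommGroup E] [NormedSpace ℝ E] [CompleteSpace E]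
    {p : ℕ} (M S : E → ℝ) (X : Fin p → E → ℝ)
    (hM : ContDiff ℝ (⊤ : ℕ∞) M) (hS : ContDiff ℝ (⊤ : ℕ∞) S)
    (hX : ∀ i, ContDiff ℝ (⊤ : ℕ∞) (X i))
    (φ : ℝ → E) (hφ : ContDiff ℝ (⊤ : ℕ∞) φ)
    (T : ℝ → ℝ) (Y : Fin p → ℝ → ℝ)
    (hT : ContDiff ℝ (⊤ : ℕ∞) T) (hY : ∀ i, ContDiff ℝ (⊤ : ℕ∞) (Y i))
    (hfl : ∀ l : ℝ, FirstLaw M S X (φ l) (T l) (fun i => Y i l))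
    (hT0 : 0 < T 0)
    (hturn : deriv φ 0 ≠ 0)
    (hturnM : deriv (M ∘ φ) 0 = 0) (hturnX : ∀ i, deriv (X i ∘ φ) 0 = 0)
    (hσ : 0 < deriv (fun l =>
      deriv T l * deriv (S ∘ φ) l + ∑ i, deriv (Y i) l * deriv (X i ∘ φ) l) 0)
    (u' : ℝ → E) (hu'cont : Continuous u')
    (hu' : ∀ᶠ l in 𝓝 (0 : ℝ),
      l * fderiv ℝ S (φ l) (u' l) = deriv (S ∘ φ) l ∧
      ∀ i, l * fderiv ℝ (X i) (φ l) (u' l) = deriv (X i ∘ φ) l) :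
    ∃ ε > 0, ∀ l ∈ Set.Ioo (0 : ℝ) ε,
      fderiv ℝ M (φ l) (deriv φ l - l • u' l) = 0 ∧
      fderiv ℝ S (φ l) (deriv φ l - l • u' l) = 0 ∧
      (∀ i, fderiv ℝ (X i) (φ l) (deriv φ l - l • u' l) = 0) ∧
      Bform M S X (φ l) (T l) (fun i => Y i l)
        (deriv φ l - l • u' l) (deriv φ l - l • u' l) < 0 := by
  classical
  set g : ℝ → ℝ := fun l =>
    deriv T l * deriv (S ∘ φ) l + ∑ i, deriv (Y i) l * deriv (X i ∘ φ) l with hg_def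
  -- chain rules
  have hchM : ∀ l, deriv (M ∘ φ) l = fderiv ℝ M (φ l) (deriv φ l) := tpt_chain hM hφ
  have hchS : ∀ l, deriv (S ∘ φ) l = fderiv ℝ S (φ l) (deriv φ l) := tpt_chain hS hφ
  have hchX : ∀ i l, deriv (X i ∘ φ) l = fderiv ℝ (X i) (φ l) (deriv φ l) :=
    fun i => tpt_chain (hX i) hφ
  -- g is smooth
  have hSφ : ContDiff ℝ (⊤ : ℕ∞) (S ∘ φ) := hS.comp hφ
  have hgsm : ContDiff ℝ (⊤ : ℕ∞) g := by
    refine ((contDiff_infty_iff_deriv.mp hT).2.mul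
      (contDiff_infty_iff_deriv.mp hSφ).2).add (ContDiff.sum fun i _ => ?_)
    exact (contDiff_infty_iff_deriv.mp (hY i)).2.mul
      (contDiff_infty_iff_deriv.mp ((hX i).comp hφ)).2
  have hgd : HasDerivAt g (deriv g 0) 0 := (hgsm.differentiable tpt_one_le 0).hasDerivAt
  -- derivative of S∘φ vanishes at 0
  have hS0 : deriv (S ∘ φ) 0 = 0 := by
    have h2 := congrArg (fun (A : E →L[ℝ] ℝ) => A (deriv φ 0)) (hfl 0)
    simp only [ContinuousLinearMap.add_apply, ContinuousLinearMap.smul_apply,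
      ContinuousLinearMap.sum_apply, smul_eq_mul] at h2
    rw [← hchM 0, ← hchS 0] at h2
    have h3 : ∀ i ∈ Finset.univ, (Y i 0) * fderiv ℝ (X i) (φ 0) (deriv φ 0) = 0 := by
      intro i _
      rw [← hchX i 0, hturnX i, mul_zero]
    rw [Finset.sum_congr rfl h3, Finset.sum_const_zero, add_zero, hturnM] at h2
    have := h2.symm
    rcases mul_eq_zero.mp this with h | h
    · exact absurd h (ne_of_gt hT0)
    · exact h
  have hg0 : g 0 = 0 := by
    simp only [hg_def, hS0, mul_zero, zero_add]
    exact Finset.sum_eq_zero fun i _ => by rw [hturnX i, mul_zero]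
  -- slope limit
  have hslope : Tendsto (fun l => g l / l) (𝓝[≠] (0 : ℝ)) (𝓝 (deriv g 0)) := by
    have h := hasDerivAt_iff_tendsto_slope.mp hgd
    have heq : slope g 0 = fun l => g l / l := by
      funext l; rw [slope_def_field, hg0, sub_zero, sub_zero]
    rwa [heq] at h
  -- continuity of the Bt term
  set Bt : ℝ → ℝ := fun l =>
    Bform M S X (φ l) (T l) (fun i => Y i l) (u' l) (u' l) with hBt_def
  have hD2c : ∀ (f : E → ℝ), ContDiff ℝ (⊤ : ℕ∞) f →
      Continuous (fun l => D2 f (φ l) (u' l) (u' l)) := by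
    intro f hf
    have h1 : Continuous fun l => fderiv ℝ (fderiv ℝ f) (φ l) := by
      exact ((tpt_fderiv_smooth (tpt_fderiv_smooth hf)).continuous).comp hφ.continuous
    exact (h1.clm_apply hu'cont).clm_apply hu'cont
  have hBtc : Continuous Bt := by
    simp only [hBt_def, Bform]
    exact ((hD2c M hM).sub (hT.continuous.mul (hD2c S hS))).sub
      (continuous_finset_sum _ fun i _ => ((hY i).continuous.mul (hD2c (X i) (hX i))))
  have hlBt : Tendsto (fun l => l * Bt l) (𝓝 (0 : ℝ)) (𝓝 0) := by
    have h : Tendsto (fun l => l * Bt l) (𝓝 (0 : ℝ)) (𝓝 (0 * Bt 0)) :=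
      (continuous_id.mul hBtc).tendsto 0
    simpa using h
  -- main limit
  have hmain : Tendsto (fun l => -(g l / l) + l * Bt l) (𝓝[>] (0 : ℝ))
      (𝓝 (-(deriv g 0) + 0)) := by
    refine Tendsto.add (Tendsto.neg ?_) (hlBt.mono_left nhdsWithin_le_nhds)
    exact hslope.mono_left (nhdsWithin_mono _ fun x hx => ne_of_gt hx)
  have hneg : ∀ᶠ l in 𝓝[>] (0 : ℝ), -(g l / l) + l * Bt l < 0 :=
    hmain.eventually_lt_const (by simpa using hσ)
  have hu'' : ∀ᶠ l in 𝓝[>] (0 : ℝ),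
      l * fderiv ℝ S (φ l) (u' l) = deriv (S ∘ φ) l ∧
      ∀ i, l * fderiv ℝ (X i) (φ l) (u' l) = deriv (X i ∘ φ) l :=
    hu'.filter_mono nhdsWithin_le_nhds
  have hfinal : ∀ᶠ l in 𝓝[>] (0 : ℝ),
      fderiv ℝ M (φ l) (deriv φ l - l • u' l) = 0 ∧
      fderiv ℝ S (φ l) (deriv φ l - l • u' l) = 0 ∧
      (∀ i, fderiv ℝ (X i) (φ l) (deriv φ l - l • u' l) = 0) ∧
      Bform M S X (φ l) (T l) (fun i => Y i l)
        (deriv φ l - l • u' l) (deriv φ l - l • u' l) < 0 := by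
    filter_upwards [hu'', hneg, self_mem_nhdsWithin] with l hl hnegl hlmem
    obtain ⟨hlS, hlX⟩ := hl
    have hlpos : (0 : ℝ) < l := hlmem
    have hl0 : l ≠ 0 := ne_of_gt hlpos
    -- first-order invariance
    have hDSu : fderiv ℝ S (φ l) (deriv φ l - l • u' l) = 0 := by
      rw [map_sub, map_smul, smul_eq_mul, ← hchS l, hlS, sub_self]
    have hDXu : ∀ i, fderiv ℝ (X i) (φ l) (deriv φ l - l • u' l) = 0 := by
      intro i
      rw [map_sub, map_smul, smul_eq_mul, ← hchX i l, hlX i, sub_self]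
    have hDMu : fderiv ℝ M (φ l) (deriv φ l - l • u' l) = 0 := by
      rw [hfl l]
      simp only [ContinuousLinearMap.add_apply, ContinuousLinearMap.smul_apply,
        ContinuousLinearMap.sum_apply, smul_eq_mul, hDSu, mul_zero, zero_add]
      exact Finset.sum_eq_zero fun i _ => by rw [hDXu i, mul_zero]
    -- the B computation
    have key := tpt_Bphi' hM hS hX hφ hT hY hfl l
    have hBau : Bform M S X (φ l) (T l) (fun i => Y i l) (deriv φ l)
        (deriv φ l - l • u' l) = 0 := by
      rw [key, hDSu, mul_zero, zero_add]
      exact Finset.sum_eq_zero fun i _ => by rw [hDXu i, mul_zero]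
    have hlg : l * Bform M S X (φ l) (T l) (fun i => Y i l) (deriv φ l) (u' l) = g l := by
      rw [key (u' l), mul_add, Finset.mul_sum]
      simp only [hg_def]
      congr 1
      · rw [← hlS]; ring
      · exact Finset.sum_congr rfl fun i _ => by rw [← hlX i]; ring
    have hBB : Bform M S X (φ l) (T l) (fun i => Y i l)
        (deriv φ l - l • u' l) (deriv φ l - l • u' l) = -(g l) + l * (l * Bt l) := by
      rw [tpt_Bform_sub_smul_left, hBau, tpt_Bform_sub_smul_right,
        tpt_Bform_symm hM hS hX]
      simp only [hBt_def]
      linear_combination (-1 : ℝ) * hlg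
    have hBfin : Bform M S X (φ l) (T l) (fun i => Y i l)
        (deriv φ l - l • u' l) (deriv φ l - l • u' l) < 0 := by
      have h1 : Bform M S X (φ l) (T l) (fun i => Y i l)
          (deriv φ l - l • u' l) (deriv φ l - l • u' l)
          = l * (-(g l / l) + l * Bt l) := by
        rw [hBB, mul_add, mul_neg, mul_div_cancel₀ _ hl0]
      rw [h1]
      exact mul_neg_of_pos_of_neg hlpos hnegl
    exact ⟨hDMu, hDSu, hDXu, hBfin⟩
  rcases mem_nhdsGT_iff_exists_Ioo_subset.mp hfinal with ⟨ε, hε, hsub⟩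
  exact ⟨ε, hε, fun l hl => hsub hl⟩
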